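/- Let G be a simple graph on [n] (with every vertex belonging to at least one edge, n ≥ 2) and K a field with the lexicographic order on K[x_1,...,x_n,y_1,...,y_n] induced by x_1 > ... > x_n > y_1 > ... > y_n. The binomials {f_{ij} = x_i y_j − x_j y_i : {i,j} ∈ E(G), i<j} form a Gröbner basis of J_G if and only if G is closed with respect to the labeling, i.e., for all edges {i,j},{k,l} with i<j, k<l: i=k implies {j,l} ∈ E(G) and j=l implies {i,k} ∈ E(G). -/

import Mathlib

open MvPolynomial

/-- A simple graph on `Fin n` is *closed with respect to the given labeling*. -/
def SimpleGraph.IsClosed {n : ℕ} (G : SimpleGraph (Fin n)) : Prop :=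
  ∀ ⦃i j k l : Fin n⦄, G.Adj i j → G.Adj k l → i < j → k < l →
    (i = k → j ≠ l → G.Adj j l) ∧ (j = l → i ≠ k → G.Adj i k)

/-- The binomial `f_{ij} = x_i y_j - x_j y_i`. -/
noncomputable def edgeBinomial (K : Type*) [Field K] {n : ℕ} (i j : Fin n) :
    MvPolynomial (Lex (Fin n ⊕ Fin n)) K :=
  X (toLex (Sum.inl i)) * X (toLex (Sum.inr j)) -
    X (toLex (Sum.inl j)) * X (toLex (Sum.inr i))

/-- The binomial edge ideal `J_G` of a simple graph `G` on `[n]`. -/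
noncomputable def binomialEdgeIdeal (K : Type*) [Field K] {n : ℕ}
    (G : SimpleGraph (Fin n)) : Ideal (MvPolynomial (Lex (Fin n ⊕ Fin n)) K) :=
  Ideal.span {p | ∃ i j : Fin n, G.Adj i j ∧ i < j ∧ p = edgeBinomial K i j}

/-- The exponent of the leading monomial of a polynomial with respect to the
lexicographic order induced by `x_1 > … > x_n > y_1 > … > y_n`. -/
noncomputable def leadExp {K : Type*} [Field K] {n : ℕ}
    (f : MvPolynomial (Lex (Fin n ⊕ Fin n)) K) : Lex (Fin n ⊕ Fin n) →₀ ℕ :=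
  ofLex (f.support.sup (fun d => toLex d))

namespace GroebnerAux

variable {K : Type*} [Field K] {n : ℕ}

/-- Abbreviation for the variable index type. -/
abbrev σn (n : ℕ) := Lex (Fin n ⊕ Fin n)

def xv (i : Fin n) : σn n := toLex (Sum.inl i)
def yv (i : Fin n) : σn n := toLex (Sum.inr i)

lemma sigma_cases (s : σn n) : (∃ a, s = xv a) ∨ ∃ a, s = yv a := by
  rcases h : ofLex s with a | a
  · exact Or.inl ⟨a, by rw [← toLex_ofLex s, h]; rfl⟩
  · exact Or.inr ⟨a, by rw [← toLex_ofLex s, h]; rfl⟩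

/-- The exponent of the monomial `x_i y_j`. -/
noncomputable def mu (i j : Fin n) : σn n →₀ ℕ :=
  Finsupp.single (xv i) 1 + Finsupp.single (yv j) 1

/-- The exponent of a product of three variables. -/
noncomputable def m3 (a b c : σn n) : σn n →₀ ℕ :=
  Finsupp.single a 1 + Finsupp.single b 1 + Finsupp.single c 1

lemma monomial_m3 (a b c : σn n) :
    (monomial (m3 a b c) (1 : K)) = X a * X b * X c := by
  simp [m3, X, monomial_mul, add_assoc]

lemma edgeBinomial_eq (i j : Fin n) :
    edgeBinomial K i j = monomial (mu i j) 1 - monomial (mu j i) 1 := by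
  simp [edgeBinomial, mu, X, monomial_mul, xv, yv]

lemma ne_of_toLex_lt {a b : σn n →₀ ℕ} (h : toLex a < toLex b) : b ≠ a := by
  rintro rfl; exact lt_irrefl _ h

theorem Finsupp.lt_of_forall_lt_of_lt {α N : Type*} [LinearOrder α] [LinearOrder N] [Zero N]
    (a b : Lex (α →₀ N)) (i : α) :
    (∀ j < i, ofLex a j = ofLex b j) → ofLex a i < ofLex b i → a < b :=
  fun h1 h2 => Finsupp.Lex.lt_iff.mpr ⟨i, h1, h2⟩

lemma toLex_mu_lt {i j : Fin n} (h : i < j) : toLex (mu j i) < toLex (mu i j) := by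
  apply Finsupp.lt_of_forall_lt_of_lt (toLex (mu j i)) (toLex (mu i j)) (xv i)
  · intro s hs
    rcases sigma_cases s with ⟨a, rfl⟩ | ⟨a, rfl⟩
    · have ha : a < i := by
        simpa [xv, Sum.Lex.inl_lt_inl_iff] using hs
      have h1 : a ≠ j := by intro h'; subst h'; exact absurd (ha.trans h) (lt_irrefl _)
      have h2 : a ≠ i := ha.ne
      simp [mu, xv, yv, Finsupp.single_apply, h1, h1.symm, h2, h2.symm]
    · exact absurd hs (by simp [xv, yv])
  · simp [mu, xv, yv, Finsupp.single_apply, h.ne, h.ne']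

/-- `x_l y_i y_j < x_j y_i y_l` when `j < l`. -/
lemma toLex_m3_lt1 {j l : Fin n} (h : j < l) (i : Fin n) :
    toLex (m3 (xv l) (yv i) (yv j)) < toLex (m3 (xv j) (yv i) (yv l)) := by
  apply Finsupp.lt_of_forall_lt_of_lt _ _ (xv j)
  · intro s hs
    rcases sigma_cases s with ⟨a, rfl⟩ | ⟨a, rfl⟩
    · have ha : a < j := by simpa [xv, Sum.Lex.inl_lt_inl_iff] using hs
      have h1 : a ≠ l := by intro h'; subst h'; exact absurd (ha.trans h) (lt_irrefl _)
      simp [m3, xv, yv, Finsupp.single_apply, h1, h1.symm, ha.ne, ha.ne']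
    · exact absurd hs (by simp [xv, yv])
  · simp [m3, xv, yv, Finsupp.single_apply, h.ne, h.ne']

/-- `x_j x_k y_i < x_i x_j y_k` when `i < j` and `i < k`. -/
lemma toLex_m3_lt2 {i j k : Fin n} (hij : i < j) (hik : i < k) :
    toLex (m3 (xv j) (xv k) (yv i)) < toLex (m3 (xv i) (xv j) (yv k)) := by
  apply Finsupp.lt_of_forall_lt_of_lt _ _ (xv i)
  · intro s hs
    rcases sigma_cases s with ⟨a, rfl⟩ | ⟨a, rfl⟩
    · have ha : a < i := by simpa [xv, Sum.Lex.inl_lt_inl_iff] using hs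
      have h1 : a ≠ j := by intro h'; subst h'; exact absurd (ha.trans hij) (lt_irrefl _)
      have h2 : a ≠ k := by intro h'; subst h'; exact absurd (ha.trans hik) (lt_irrefl _)
      simp [m3, xv, yv, Finsupp.single_apply, h1, h1.symm, h2, h2.symm, ha.ne, ha.ne']
    · exact absurd hs (by simp [xv, yv])
  · simp [m3, xv, yv, Finsupp.single_apply, hij.ne, hij.ne', hik.ne, hik.ne']

section leadExp

lemma toLex_leadExp (f : MvPolynomial (σn n) K) :
    toLex (leadExp f) = f.support.sup (fun d => toLex d) := by
  simp [leadExp]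

lemma coeff_leadExp_ne_zero {f : MvPolynomial (σn n) K} (hf : f ≠ 0) :
    coeff (leadExp f) f ≠ 0 := by
  obtain ⟨b, hb, he⟩ := Finset.exists_mem_eq_sup f.support
    (support_nonempty.mpr hf) (fun d => toLex d)
  have : leadExp f = b := by simp [leadExp, he]
  rw [this]
  exact mem_support_iff.mp hb

lemma le_toLex_leadExp {f : MvPolynomial (σn n) K} {d : σn n →₀ ℕ}
    (h : d ∈ f.support) : toLex d ≤ toLex (leadExp f) := by
  rw [toLex_leadExp]; exact Finset.le_sup h

lemma coeff_pair (a b e : σn n →₀ ℕ) :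
    coeff e (monomial a (1:K) - monomial b 1)
      = (if a = e then (1:K) else 0) - (if b = e then 1 else 0) := by
  simp [coeff_sub, coeff_monomial]

lemma pair_ne_zero {a b : σn n →₀ ℕ} (h : a ≠ b) :
    (monomial a (1:K) - monomial b 1) ≠ 0 := by
  intro h0
  have := coeff_pair (K := K) a b a
  rw [h0] at this
  simp [h.symm] at this

lemma support_pair {a b : σn n →₀ ℕ} (h : a ≠ b) :
    (monomial a (1:K) - monomial b 1).support = {a, b} := by
  ext e
  rw [mem_support_iff, coeff_pair]
  simp only [Finset.mem_insert, Finset.mem_singleton]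
  rcases eq_or_ne a e with rfl | ha
  · simp [h, Ne.symm h]
  · rcases eq_or_ne b e with rfl | hb
    · simp [ha, Ne.symm ha]
    · simp [ha, hb, Ne.symm ha, Ne.symm hb]

lemma leadExp_pair {a b : σn n →₀ ℕ} (h : toLex b < toLex a) :
    leadExp (monomial a (1:K) - monomial b 1) = a := by
  have hne : a ≠ b := (ne_of_toLex_lt h)
  rw [leadExp, support_pair hne]
  rw [Finset.sup_insert, Finset.sup_singleton]
  rw [sup_eq_left.mpr h.le]
  rfl

lemma leadExp_edgeBinomial {i j : Fin n} (h : i < j) :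
    leadExp (edgeBinomial K i j) = mu i j := by
  rw [edgeBinomial_eq]
  exact leadExp_pair (toLex_mu_lt h)

lemma edgeBinomial_ne_zero {i j : Fin n} (h : i < j) :
    edgeBinomial K i j ≠ 0 := by
  rw [edgeBinomial_eq]
  exact pair_ne_zero (ne_of_toLex_lt (toLex_mu_lt h))

end leadExp


section Rewriting

variable {G : SimpleGraph (Fin n)}

/-- One step of the (lex-decreasing) rewriting `x_i y_j → x_j y_i` for an edge `{i,j}`,
`i < j`, on exponent vectors. -/
def Rel (G : SimpleGraph (Fin n)) (d e : σn n →₀ ℕ) : Prop :=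
  ∃ i j : Fin n, G.Adj i j ∧ i < j ∧ ∃ c, d = c + mu i j ∧ e = c + mu j i

lemma Rel.toLex_lt {d e : σn n →₀ ℕ} (h : Rel G d e) : toLex e < toLex d := by
  obtain ⟨i, j, -, hij, c, rfl, rfl⟩ := h
  have : toLex c + toLex (mu j i) < toLex c + toLex (mu i j) :=
    add_lt_add_right (toLex_mu_lt hij) _
  exact this

lemma reflTransGen_toLex_le {d e : σn n →₀ ℕ}
    (h : Relation.ReflTransGen (Rel G) d e) : toLex e ≤ toLex d := by
  induction h with
  | refl => exact le_rfl
  | tail _ h ih => exact h.toLex_lt.le.trans ih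

lemma standard_no_step {d e : σn n →₀ ℕ}
    (hstd : ∀ i j : Fin n, G.Adj i j → i < j → ¬ mu i j ≤ d)
    (h : Relation.ReflTransGen (Rel G) d e) : e = d := by
  rcases Relation.ReflTransGen.cases_head h with rfl | ⟨e', he', -⟩
  · rfl
  · exfalso
    obtain ⟨i, j, hadj, hij, c, hd, -⟩ := he'
    exact hstd i j hadj hij (hd ▸ le_add_self)

lemma single_le_of_apply_pos {s : σn n} {c : σn n →₀ ℕ} (h : 1 ≤ c s) :
    Finsupp.single s 1 ≤ c := by
  rw [Finsupp.le_def]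
  intro t
  rw [Finsupp.single_apply]
  split_ifs with ht
  · exact ht ▸ h
  · exact Nat.zero_le _

lemma diamond (hG : G.IsClosed) : ∀ d e1 e2, Rel G d e1 → Rel G d e2 →
    ∃ e, Relation.ReflGen (Rel G) e1 e ∧ Relation.ReflTransGen (Rel G) e2 e := by
  rintro d e1 e2 ⟨i, j, hadj1, hij, c1, rfl, rfl⟩ ⟨k, l, hadj2, hkl, c2, hd, rfl⟩
  by_cases hik : i = k
  · subst hik
    by_cases hjl : j = l
    · subst hjl
      obtain rfl : c1 = c2 := add_right_cancel hd
      exact ⟨_, Relation.ReflGen.refl, Relation.ReflTransGen.refl⟩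
    · -- moves x_i y_j and x_i y_l
      have hyl : 1 ≤ c1 (yv l) := by
        have := congrArg (fun (v : σn n →₀ ℕ) => v (yv l)) hd
        simp only [Finsupp.add_apply] at this
        have h1 : mu i j (yv l) = 0 := by
          simp [mu, xv, yv, Finsupp.single_apply, hjl]
        have h2 : mu i l (yv l) = 1 := by
          simp [mu, xv, yv, Finsupp.single_apply]
        omega
      obtain ⟨c, hc⟩ := le_iff_exists_add.mp (single_le_of_apply_pos hyl)
      subst hc
      have hc2 : c2 = Finsupp.single (yv j) 1 + c := by
        apply add_right_cancel (b := mu i l)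
        rw [← hd]
        simp only [mu]
        abel
      subst hc2
      rcases lt_or_gt_of_ne hjl with hlt | hlt
      · have hadj : G.Adj j l := (hG hadj1 hadj2 hij hkl).1 rfl hjl
        refine ⟨_, Relation.ReflGen.single ?_, Relation.ReflTransGen.refl⟩
        exact ⟨j, l, hadj, hlt, Finsupp.single (yv i) 1 + c,
          by simp only [mu]; abel, by simp only [mu]; abel⟩
      · have hadj : G.Adj l j := (hG hadj2 hadj1 hkl hij).1 rfl (Ne.symm hjl)
        refine ⟨_, Relation.ReflGen.refl, Relation.ReflTransGen.single ?_⟩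
        exact ⟨l, j, hadj, hlt, Finsupp.single (yv i) 1 + c,
          by simp only [mu]; abel, by simp only [mu]; abel⟩
  · by_cases hjl : j = l
    · subst hjl
      -- moves x_i y_j and x_k y_j
      have hxk : 1 ≤ c1 (xv k) := by
        have := congrArg (fun (v : σn n →₀ ℕ) => v (xv k)) hd
        simp only [Finsupp.add_apply] at this
        have h1 : mu i j (xv k) = 0 := by
          simp [mu, xv, yv, Finsupp.single_apply, hik]
        have h2 : mu k j (xv k) = 1 := by
          simp [mu, xv, yv, Finsupp.single_apply]
        omega
      obtain ⟨c, hc⟩ := le_iff_exists_add.mp (single_le_of_apply_pos hxk)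
      subst hc
      have hc2 : c2 = Finsupp.single (xv i) 1 + c := by
        apply add_right_cancel (b := mu k j)
        rw [← hd]
        simp only [mu]
        abel
      subst hc2
      rcases lt_or_gt_of_ne hik with hlt | hlt
      · have hadj : G.Adj i k := (hG hadj1 hadj2 hij hkl).2 rfl hik
        refine ⟨_, Relation.ReflGen.refl, Relation.ReflTransGen.single ?_⟩
        exact ⟨i, k, hadj, hlt, Finsupp.single (xv j) 1 + c,
          by simp only [mu]; abel, by simp only [mu]; abel⟩
      · have hadj : G.Adj k i := (hG hadj2 hadj1 hkl hij).2 rfl (Ne.symm hik)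
        refine ⟨_, Relation.ReflGen.single ?_, Relation.ReflTransGen.refl⟩
        exact ⟨k, i, hadj, hlt, Finsupp.single (xv j) 1 + c,
          by simp only [mu]; abel, by simp only [mu]; abel⟩
    · -- disjoint moves
      have hxk : 1 ≤ c1 (xv k) := by
        have := congrArg (fun (v : σn n →₀ ℕ) => v (xv k)) hd
        simp only [Finsupp.add_apply] at this
        have h1 : mu i j (xv k) = 0 := by
          simp [mu, xv, yv, Finsupp.single_apply, hik]
        have h2 : mu k l (xv k) = 1 := by
          simp [mu, xv, yv, Finsupp.single_apply]
        omega
      have hyl : 1 ≤ c1 (yv l) := by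
        have := congrArg (fun (v : σn n →₀ ℕ) => v (yv l)) hd
        simp only [Finsupp.add_apply] at this
        have h1 : mu i j (yv l) = 0 := by
          simp [mu, xv, yv, Finsupp.single_apply, hjl]
        have h2 : mu k l (yv l) = 1 := by
          simp [mu, xv, yv, Finsupp.single_apply]
        omega
      have hmu : mu k l ≤ c1 := by
        rw [Finsupp.le_def]
        intro t
        rcases eq_or_ne t (xv k) with rfl | h1
        · have : mu k l (xv k) = 1 := by
            simp [mu, xv, yv, Finsupp.single_apply]
          omega
        · rcases eq_or_ne t (yv l) with rfl | h2
          · have : mu k l (yv l) = 1 := by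
              simp [mu, xv, yv, Finsupp.single_apply]
            omega
          · have : mu k l t = 0 := by
              simp [mu, Finsupp.single_apply, Ne.symm h1, Ne.symm h2]
            omega
      obtain ⟨c, hc⟩ := le_iff_exists_add.mp hmu
      subst hc
      have hc2 : c2 = mu i j + c := by
        apply add_right_cancel (b := mu k l)
        rw [← hd]
        abel
      subst hc2
      refine ⟨c + mu j i + mu l k, Relation.ReflGen.single ?_,
        Relation.ReflTransGen.single ?_⟩
      · exact ⟨k, l, hadj2, hkl, c + mu j i, by abel, by abel⟩
      · exact ⟨i, j, hadj1, hij, c + mu l k, by abel, by abel⟩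

lemma join_of_eqvGen (hG : G.IsClosed) {d d' : σn n →₀ ℕ}
    (h : Relation.EqvGen (Rel G) d d') :
    Relation.Join (Relation.ReflTransGen (Rel G)) d d' := by
  have equiv : Equivalence (Relation.Join (Relation.ReflTransGen (Rel G))) :=
    Relation.equivalence_join_reflTransGen (diamond hG)
  induction h with
  | rel a b hab => exact ⟨b, Relation.ReflTransGen.single hab, Relation.ReflTransGen.refl⟩
  | refl a => exact equiv.refl a
  | symm a b _ ih => exact equiv.symm ih
  | trans a b c _ _ ih1 ih2 => exact equiv.trans ih1 ih2

lemma standard_min (hG : G.IsClosed) {d d' : σn n →₀ ℕ}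
    (hstd : ∀ i j : Fin n, G.Adj i j → i < j → ¬ mu i j ≤ d)
    (h : Relation.EqvGen (Rel G) d d') : toLex d ≤ toLex d' := by
  obtain ⟨e, h1, h2⟩ := join_of_eqvGen hG h
  obtain rfl : e = d := standard_no_step hstd h1
  exact reflTransGen_toLex_le h2

end Rewriting

section ClassSum

open Classical in
/-- The sum of the coefficients of `f` over the congruence class of the monomial `d0`. -/
noncomputable def classSum (G : SimpleGraph (Fin n)) (d0 : σn n →₀ ℕ)
    (f : MvPolynomial (σn n) K) : K :=
  ∑ e ∈ f.support, if Relation.EqvGen (Rel G) e d0 then coeff e f else 0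

variable {G : SimpleGraph (Fin n)} {d0 : σn n →₀ ℕ}

open Classical in
lemma classSum_eq_of_subset {f : MvPolynomial (σn n) K} {s : Finset (σn n →₀ ℕ)}
    (hs : f.support ⊆ s) :
    classSum G d0 f = ∑ e ∈ s, if Relation.EqvGen (Rel G) e d0 then coeff e f else 0 := by
  classical
  refine Finset.sum_subset hs (fun e _ he => ?_)
  rw [notMem_support_iff.mp he]
  simp

lemma classSum_zero : classSum G d0 (0 : MvPolynomial (σn n) K) = 0 := by
  simp [classSum]

lemma classSum_add (f g : MvPolynomial (σn n) K) :
    classSum G d0 (f + g) = classSum G d0 f + classSum G d0 g := by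
  classical
  rw [classSum_eq_of_subset (s := f.support ∪ g.support) support_add,
    classSum_eq_of_subset (s := f.support ∪ g.support) Finset.subset_union_left,
    classSum_eq_of_subset (s := f.support ∪ g.support) Finset.subset_union_right,
    ← Finset.sum_add_distrib]
  refine Finset.sum_congr rfl (fun e _ => ?_)
  split_ifs <;> simp [coeff_add]

lemma classSum_neg (f : MvPolynomial (σn n) K) :
    classSum G d0 (-f) = - classSum G d0 f := by
  classical
  rw [classSum, classSum, support_neg, ← Finset.sum_neg_distrib]
  refine Finset.sum_congr rfl (fun e _ => ?_)
  split_ifs <;> simp [coeff_neg]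

lemma classSum_sub (f g : MvPolynomial (σn n) K) :
    classSum G d0 (f - g) = classSum G d0 f - classSum G d0 g := by
  rw [sub_eq_add_neg, classSum_add, classSum_neg, sub_eq_add_neg]

lemma classSum_sum {α : Type*} (s : Finset α) (g : α → MvPolynomial (σn n) K) :
    classSum G d0 (∑ a ∈ s, g a) = ∑ a ∈ s, classSum G d0 (g a) := by
  classical
  induction s using Finset.induction_on with
  | empty => simp [classSum_zero]
  | insert _ _ hx ih =>
    rw [Finset.sum_insert hx, Finset.sum_insert hx, classSum_add, ih]

open Classical in
lemma classSum_monomial (u : σn n →₀ ℕ) (c : K) :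
    classSum G d0 (monomial u c) = if Relation.EqvGen (Rel G) u d0 then c else 0 := by
  classical
  rcases eq_or_ne c 0 with rfl | hc
  · simp [classSum_zero]
  · rw [classSum, support_monomial, if_neg hc, Finset.sum_singleton]
    simp [coeff_monomial]

lemma classSum_mul_edge {i j : Fin n} (hadj : G.Adj i j) (hij : i < j)
    (p : MvPolynomial (σn n) K) :
    classSum G d0 (p * edgeBinomial K i j) = 0 := by
  classical
  have key : ∀ (u : σn n →₀ ℕ) (c : K),
      classSum G d0 (monomial u c * edgeBinomial K i j) = 0 := by
    intro u c
    rw [edgeBinomial_eq, mul_sub, monomial_mul, monomial_mul, classSum_sub,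
      classSum_monomial, classSum_monomial]
    have hrel : Relation.EqvGen (Rel G) (u + mu i j) (u + mu j i) :=
      Relation.EqvGen.rel _ _ ⟨i, j, hadj, hij, u, rfl, rfl⟩
    by_cases h : Relation.EqvGen (Rel G) (u + mu i j) d0
    · rw [if_pos h, if_pos ((Relation.EqvGen.symm _ _ hrel).trans _ _ _ h), sub_self]
    · rw [if_neg h, if_neg (fun h' => h (hrel.trans _ _ _ h')), sub_self]
  have hp : p * edgeBinomial K i j
      = ∑ v ∈ p.support, monomial v (coeff v p) * edgeBinomial K i j := by
    rw [← Finset.sum_mul, ← as_sum]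
  rw [hp, classSum_sum, Finset.sum_eq_zero (fun v _ => key v (coeff v p))]

lemma classSum_of_mem {f : MvPolynomial (σn n) K} (hf : f ∈ binomialEdgeIdeal K G)
    (d0 : σn n →₀ ℕ) : classSum G d0 f = 0 := by
  have H : ∀ p : MvPolynomial (σn n) K, ∀ d0 : σn n →₀ ℕ, classSum G d0 (p * f) = 0 := by
    refine Submodule.span_induction
      (p := fun g _ => ∀ p : MvPolynomial (σn n) K, ∀ d0 : σn n →₀ ℕ,
        classSum G d0 (p * g) = 0) ?_ ?_ ?_ ?_ hf
    · rintro x ⟨i, j, hadj, hij, rfl⟩ p d0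
      exact classSum_mul_edge hadj hij p
    · intro p d0
      rw [mul_zero, classSum_zero]
    · intro x y _ _ hx hy p d0
      rw [mul_add, classSum_add, hx, hy, add_zero]
    · intro a x _ hx p d0
      rw [smul_eq_mul, ← mul_assoc, hx]
  have := H 1 d0
  rwa [one_mul] at this

end ClassSum

end GroebnerAux

open GroebnerAux in
/-- The generators `f_{ij}` (for edges `{i,j}` of `G`, `i < j`) form a Gröbner basis of
`J_G` with respect to the lexicographic order induced by
`x_1 > … > x_n > y_1 > … > y_n` (that is, the leading monomial of every nonzero element
of `J_G` is divisible by the leading monomial `x_i y_j` of some generator) if and only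
if `G` is closed with respect to the given labeling. -/
theorem groebnerBasis_iff_closed (K : Type*) [Field K] {n : ℕ} (hn : 2 ≤ n)
    (G : SimpleGraph (Fin n)) (hv : ∀ v : Fin n, ∃ w, G.Adj v w) :
    (∀ f ∈ binomialEdgeIdeal K G, f ≠ 0 →
        ∃ i j : Fin n, G.Adj i j ∧ i < j ∧ leadExp (edgeBinomial K i j) ≤ leadExp f) ↔
      G.IsClosed := by
  classical
  constructor
  · intro h i j k l hij hkl hij' hkl'
    constructor
    · intro hik hjl
      subst hik
      rcases lt_or_gt_of_ne hjl with hlt | hlt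
      · -- j < l
        have hg : X (yv j) * edgeBinomial K i l - X (yv l) * edgeBinomial K i j
            = monomial (m3 (xv j) (yv i) (yv l)) 1
              - monomial (m3 (xv l) (yv i) (yv j)) 1 := by
          rw [monomial_m3, monomial_m3]
          simp only [edgeBinomial, xv, yv]
          ring
        have hmem : X (yv j) * edgeBinomial K i l - X (yv l) * edgeBinomial K i j
            ∈ binomialEdgeIdeal K G :=
          sub_mem (Ideal.mul_mem_left _ _ (Ideal.subset_span ⟨i, l, hkl, hkl', rfl⟩))
            (Ideal.mul_mem_left _ _ (Ideal.subset_span ⟨i, j, hij, hij', rfl⟩))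
        have hne0 : X (yv j) * edgeBinomial K i l - X (yv l) * edgeBinomial K i j ≠ 0 := by
          rw [hg]; exact pair_ne_zero (ne_of_toLex_lt (toLex_m3_lt1 hlt i))
        obtain ⟨a, b, hab, hab', hle⟩ := h _ hmem hne0
        have hlead : leadExp (X (yv j) * edgeBinomial K i l - X (yv l) * edgeBinomial K i j)
            = m3 (xv j) (yv i) (yv l) := by
          rw [hg]; exact leadExp_pair (toLex_m3_lt1 hlt i)
        rw [hlead, leadExp_edgeBinomial hab'] at hle
        have h1 := Finsupp.le_def.mp hle (xv a)
        have h2 := Finsupp.le_def.mp hle (yv b)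
        simp [mu, m3, xv, yv, Finsupp.single_apply] at h1 h2
        have haj : j = a := by by_contra hne; simp [hne] at h1
        subst haj
        have hbil : i = b ∨ l = b := by
          by_contra hne; push_neg at hne; simp [hne.1, hne.2] at h2
        rcases hbil with rfl | rfl
        · exact absurd (hij'.trans hab') (lt_irrefl _)
        · exact hab
      · -- l < j
        have hg : X (yv l) * edgeBinomial K i j - X (yv j) * edgeBinomial K i l
            = monomial (m3 (xv l) (yv i) (yv j)) 1
              - monomial (m3 (xv j) (yv i) (yv l)) 1 := by
          rw [monomial_m3, monomial_m3]
          simp only [edgeBinomial, xv, yv]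
          ring
        have hmem : X (yv l) * edgeBinomial K i j - X (yv j) * edgeBinomial K i l
            ∈ binomialEdgeIdeal K G :=
          sub_mem (Ideal.mul_mem_left _ _ (Ideal.subset_span ⟨i, j, hij, hij', rfl⟩))
            (Ideal.mul_mem_left _ _ (Ideal.subset_span ⟨i, l, hkl, hkl', rfl⟩))
        have hne0 : X (yv l) * edgeBinomial K i j - X (yv j) * edgeBinomial K i l ≠ 0 := by
          rw [hg]; exact pair_ne_zero (ne_of_toLex_lt (toLex_m3_lt1 hlt i))
        obtain ⟨a, b, hab, hab', hle⟩ := h _ hmem hne0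
        have hlead : leadExp (X (yv l) * edgeBinomial K i j - X (yv j) * edgeBinomial K i l)
            = m3 (xv l) (yv i) (yv j) := by
          rw [hg]; exact leadExp_pair (toLex_m3_lt1 hlt i)
        rw [hlead, leadExp_edgeBinomial hab'] at hle
        have h1 := Finsupp.le_def.mp hle (xv a)
        have h2 := Finsupp.le_def.mp hle (yv b)
        simp [mu, m3, xv, yv, Finsupp.single_apply] at h1 h2
        have hal : l = a := by by_contra hne; simp [hne] at h1
        subst hal
        have hbij : i = b ∨ j = b := by
          by_contra hne; push_neg at hne; simp [hne.1, hne.2] at h2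
        rcases hbij with rfl | rfl
        · exact absurd (hkl'.trans hab') (lt_irrefl _)
        · exact hab.symm
    · intro hjl hik
      subst hjl
      rcases lt_or_gt_of_ne hik with hlt | hlt
      · -- i < k
        have hg : X (xv k) * edgeBinomial K i j - X (xv i) * edgeBinomial K k j
            = monomial (m3 (xv i) (xv j) (yv k)) 1
              - monomial (m3 (xv j) (xv k) (yv i)) 1 := by
          rw [monomial_m3, monomial_m3]
          simp only [edgeBinomial, xv, yv]
          ring
        have hmem : X (xv k) * edgeBinomial K i j - X (xv i) * edgeBinomial K k j
            ∈ binomialEdgeIdeal K G :=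
          sub_mem (Ideal.mul_mem_left _ _ (Ideal.subset_span ⟨i, j, hij, hij', rfl⟩))
            (Ideal.mul_mem_left _ _ (Ideal.subset_span ⟨k, j, hkl, hkl', rfl⟩))
        have hne0 : X (xv k) * edgeBinomial K i j - X (xv i) * edgeBinomial K k j ≠ 0 := by
          rw [hg]; exact pair_ne_zero (ne_of_toLex_lt (toLex_m3_lt2 hij' hlt))
        obtain ⟨a, b, hab, hab', hle⟩ := h _ hmem hne0
        have hlead : leadExp (X (xv k) * edgeBinomial K i j - X (xv i) * edgeBinomial K k j)
            = m3 (xv i) (xv j) (yv k) := by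
          rw [hg]; exact leadExp_pair (toLex_m3_lt2 hij' hlt)
        rw [hlead, leadExp_edgeBinomial hab'] at hle
        have h1 := Finsupp.le_def.mp hle (xv a)
        have h2 := Finsupp.le_def.mp hle (yv b)
        simp [mu, m3, xv, yv, Finsupp.single_apply] at h1 h2
        have hbk : k = b := by by_contra hne; simp [hne] at h2
        subst hbk
        have haij : i = a ∨ j = a := by
          by_contra hne; push_neg at hne; simp [hne.1, hne.2] at h1
        rcases haij with rfl | rfl
        · exact hab
        · exact absurd (hkl'.trans hab') (lt_irrefl _)
      · -- k < i
        have hg : X (xv i) * edgeBinomial K k j - X (xv k) * edgeBinomial K i j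
            = monomial (m3 (xv k) (xv j) (yv i)) 1
              - monomial (m3 (xv j) (xv i) (yv k)) 1 := by
          rw [monomial_m3, monomial_m3]
          simp only [edgeBinomial, xv, yv]
          ring
        have hmem : X (xv i) * edgeBinomial K k j - X (xv k) * edgeBinomial K i j
            ∈ binomialEdgeIdeal K G :=
          sub_mem (Ideal.mul_mem_left _ _ (Ideal.subset_span ⟨k, j, hkl, hkl', rfl⟩))
            (Ideal.mul_mem_left _ _ (Ideal.subset_span ⟨i, j, hij, hij', rfl⟩))
        have hne0 : X (xv i) * edgeBinomial K k j - X (xv k) * edgeBinomial K i j ≠ 0 := by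
          rw [hg]; exact pair_ne_zero (ne_of_toLex_lt (toLex_m3_lt2 hkl' hlt))
        obtain ⟨a, b, hab, hab', hle⟩ := h _ hmem hne0
        have hlead : leadExp (X (xv i) * edgeBinomial K k j - X (xv k) * edgeBinomial K i j)
            = m3 (xv k) (xv j) (yv i) := by
          rw [hg]; exact leadExp_pair (toLex_m3_lt2 hkl' hlt)
        rw [hlead, leadExp_edgeBinomial hab'] at hle
        have h1 := Finsupp.le_def.mp hle (xv a)
        have h2 := Finsupp.le_def.mp hle (yv b)
        simp [mu, m3, xv, yv, Finsupp.single_apply] at h1 h2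
        have hbi : i = b := by by_contra hne; simp [hne] at h2
        subst hbi
        have hakj : k = a ∨ j = a := by
          by_contra hne; push_neg at hne; simp [hne.1, hne.2] at h1
        rcases hakj with rfl | rfl
        · exact hab.symm
        · exact absurd (hij'.trans hab') (lt_irrefl _)
  · intro hG f hf hf0
    by_contra hcon
    push_neg at hcon
    have hstd : ∀ i j : Fin n, G.Adj i j → i < j → ¬ mu i j ≤ leadExp f := by
      intro i j ha hb hle
      exact hcon i j ha hb (by rw [leadExp_edgeBinomial hb]; exact hle)
    have hcd : coeff (leadExp f) f ≠ 0 := coeff_leadExp_ne_zero hf0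
    have hsum := classSum_of_mem hf (leadExp f)
    have hex : ∃ e ∈ f.support, e ≠ leadExp f ∧ Relation.EqvGen (Rel G) e (leadExp f) := by
      by_contra h2
      push_neg at h2
      have heq : classSum G (leadExp f) f = coeff (leadExp f) f := by
        rw [classSum]
        rw [Finset.sum_eq_single_of_mem (leadExp f) (mem_support_iff.mpr hcd)
          (fun e he hne => by rw [if_neg (h2 e he hne)])]
        exact if_pos (Relation.EqvGen.refl _)
      rw [hsum] at heq
      exact hcd heq.symm
    obtain ⟨e, hes, hne, heqv⟩ := hex
    have h1 : toLex e ≤ toLex (leadExp f) := le_toLex_leadExp hes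
    have h2 : toLex (leadExp f) ≤ toLex e :=
      standard_min hG hstd (Relation.EqvGen.symm _ _ heqv)
    exact hne (toLex.injective (le_antisymm h1 h2))
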